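/- Every maximal ideal of W of odd residue characteristic is principal. Precisely: if m is a maximal ideal of the ring W such that the element 2 = (2, 2, 2) of W does not lie in m, then m is a principal ideal of W. -/

import Mathlib

section PID
variable {d : ℤ}

lemma zsqrtd_div (hd : 0 < d) (hd3 : d ≤ 3) (hns : ∀ n : ℤ, d ≠ n * n)
    (x y : Zsqrtd d) (hy : y ≠ 0) :
    ∃ q : Zsqrtd d, ((x - q * y).norm).natAbs < (y.norm).natAbs := by
  set n : ℤ := y.norm with hn
  have hn0 : n ≠ 0 := fun h => hy ((Zsqrtd.norm_eq_zero hns y).mp h)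
  have hnQ : ((n : ℚ)) ≠ 0 := Int.cast_ne_zero.mpr hn0
  set z : Zsqrtd d := x * star y with hz
  set q : Zsqrtd d := ⟨round ((z.re : ℚ)/(n:ℚ)), round ((z.im : ℚ)/(n:ℚ))⟩ with hq
  refine ⟨q, ?_⟩
  have hyy : y * star y = (n : Zsqrtd d) := (Zsqrtd.norm_eq_mul_conj y).symm
  have key : (x - q * y) * star y = z - q * (n : Zsqrtd d) := by
    rw [← hyy, hz]; ring
  set r1 : ℤ := z.re - n * q.re with hr1
  set r2 : ℤ := z.im - n * q.im with hr2
  have hnormeq : (x - q * y).norm * n = r1 * r1 - d * r2 * r2 := by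
    have := congrArg Zsqrtd.norm key
    rw [Zsqrtd.norm_mul, Zsqrtd.norm_conj, ← hn] at this
    rw [this, Zsqrtd.norm_def]
    simp [Zsqrtd.re_sub, Zsqrtd.im_sub, Zsqrtd.re_mul, Zsqrtd.im_mul,
      Zsqrtd.re_intCast, Zsqrtd.im_intCast, hr1, hr2]
    ring
  -- bounds
  have hb1 : |(r1 : ℚ)| ≤ |(n:ℚ)| / 2 := by
    have h := abs_sub_round ((z.re : ℚ)/(n:ℚ))
    have : (r1 : ℚ) = (n:ℚ) * ((z.re : ℚ)/(n:ℚ) - round ((z.re : ℚ)/(n:ℚ))) := by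
      field_simp [hr1]
      push_cast [hr1, hq]
      rfl
    rw [this, abs_mul]
    calc |(n:ℚ)| * |(z.re : ℚ)/(n:ℚ) - round ((z.re : ℚ)/(n:ℚ))| ≤ |(n:ℚ)| * (1/2) := by
          exact mul_le_mul_of_nonneg_left h (abs_nonneg _)
      _ = |(n:ℚ)| / 2 := by ring
  have hb2 : |(r2 : ℚ)| ≤ |(n:ℚ)| / 2 := by
    have h := abs_sub_round ((z.im : ℚ)/(n:ℚ))
    have : (r2 : ℚ) = (n:ℚ) * ((z.im : ℚ)/(n:ℚ) - round ((z.im : ℚ)/(n:ℚ))) := by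
      field_simp [hr2]
      push_cast [hr2, hq]
      rfl
    rw [this, abs_mul]
    calc |(n:ℚ)| * |(z.im : ℚ)/(n:ℚ) - round ((z.im : ℚ)/(n:ℚ))| ≤ |(n:ℚ)| * (1/2) := by
          exact mul_le_mul_of_nonneg_left h (abs_nonneg _)
      _ = |(n:ℚ)| / 2 := by ring
  have hsq1 : (r1:ℚ)^2 ≤ (n:ℚ)^2/4 := by
    have h := pow_le_pow_left₀ (abs_nonneg _) hb1 2
    rw [sq_abs] at h
    have h2 : ((|(n:ℚ)|)/2)^2 = (n:ℚ)^2/4 := by rw [div_pow, sq_abs]; norm_num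
    linarith
  have hsq2 : (r2:ℚ)^2 ≤ (n:ℚ)^2/4 := by
    have h := pow_le_pow_left₀ (abs_nonneg _) hb2 2
    rw [sq_abs] at h
    have h2 : ((|(n:ℚ)|)/2)^2 = (n:ℚ)^2/4 := by rw [div_pow, sq_abs]; norm_num
    linarith
  have hdQ : (0:ℚ) < (d:ℚ) := by exact_mod_cast hd
  have hd3Q : (d:ℚ) ≤ 3 := by exact_mod_cast hd3
  have hnpos : (0:ℚ) < (n:ℚ)^2 := by positivity
  have habs : |(r1:ℚ)*r1 - d*r2*r2| < (n:ℚ)^2 := by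
    rw [abs_sub_lt_iff]
    constructor <;> nlinarith [sq_nonneg (r1:ℚ), sq_nonneg (r2:ℚ)]
  -- conclude
  have hZ : |(x - q*y).norm| * |n| < |n| * |n| := by
    have h1 : |((x - q*y).norm : ℚ)| * |(n:ℚ)| < |(n:ℚ)| * |(n:ℚ)| := by
      rw [← abs_mul]
      calc |((x - q*y).norm : ℚ) * (n:ℚ)| = |(r1:ℚ)*r1 - d*r2*r2| := by
            rw [show ((x - q*y).norm : ℚ) * (n:ℚ) = ((r1:ℚ)*r1 - d*r2*r2) by
              exact_mod_cast congrArg (Int.cast : ℤ → ℚ) hnormeq]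
        _ < (n:ℚ)^2 := habs
        _ = |(n:ℚ)| * |(n:ℚ)| := by rw [← sq_abs]; ring
    exact_mod_cast h1
  have hlt : |(x - q*y).norm| < |n| := by
    have hnabs : 0 < |n| := abs_pos.mpr hn0
    exact lt_of_mul_lt_mul_right hZ (le_of_lt hnabs)
  rw [Int.abs_eq_natAbs, Int.abs_eq_natAbs] at hlt
  exact_mod_cast hlt

lemma zsqrtd_pir (hd : 0 < d) (hd3 : d ≤ 3) (hns : ∀ n : ℤ, d ≠ n * n) :
    IsPrincipalIdealRing (Zsqrtd d) := by
  constructor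
  intro I
  by_cases hI : I = ⊥
  · subst hI; exact ⟨0, (Ideal.span_zero).symm⟩
  · obtain ⟨y0, hy0I, hy00⟩ := Submodule.exists_mem_ne_zero_of_ne_bot hI
    set S : Set ℕ := {k | ∃ y ∈ I, y ≠ 0 ∧ (Zsqrtd.norm y).natAbs = k} with hS
    have hSne : S.Nonempty := ⟨_, y0, hy0I, hy00, rfl⟩
    obtain ⟨y, hyI, hy0, hymin⟩ := Nat.sInf_mem hSne
    refine ⟨y, ?_⟩
    ext x
    rw [Ideal.submodule_span_eq, Ideal.mem_span_singleton]
    constructor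
    · intro hx
      obtain ⟨q, hq⟩ := zsqrtd_div hd hd3 hns x y hy0
      rcases eq_or_ne (x - q * y) 0 with h0 | h0
      · exact ⟨q, by rw [mul_comm]; exact sub_eq_zero.mp h0⟩
      · exfalso
        have hmem : x - q * y ∈ I := I.sub_mem hx (I.mul_mem_left q hyI)
        have : (Zsqrtd.norm (x - q*y)).natAbs ∈ S := ⟨_, hmem, h0, rfl⟩
        have := Nat.sInf_le this
        omega
    · rintro ⟨c, rfl⟩
      exact I.mul_mem_right c hyI

end PID

lemma nonsq_aux {d : ℤ} (h1 : 1 < d) (h2 : d < 4) : ∀ n : ℤ, d ≠ n * n := by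
  intro n h
  have h3 : n.natAbs * n.natAbs = d.natAbs := by
    rw [← Int.natAbs_mul, ← h]
  have hd' : d.natAbs = 2 ∨ d.natAbs = 3 := by omega
  set m := n.natAbs
  have : m ≤ 1 ∨ 2 ≤ m := by omega
  rcases this with hm | hm
  · have : m * m ≤ 1 * 1 := Nat.mul_le_mul hm hm
    omega
  · have : 2 * 2 ≤ m * m := Nat.mul_le_mul hm hm
    omega

lemma pir2 : IsPrincipalIdealRing (Zsqrtd 2) :=
  zsqrtd_pir (by norm_num) (by norm_num) (nonsq_aux (by norm_num) (by norm_num))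

lemma pir3 : IsPrincipalIdealRing (Zsqrtd 3) :=
  zsqrtd_pir (by norm_num) (by norm_num) (nonsq_aux (by norm_num) (by norm_num))

lemma prod_pir (A B : Type*) [CommRing A] [CommRing B]
    [IsPrincipalIdealRing A] [IsPrincipalIdealRing B] :
    IsPrincipalIdealRing (A × B) := by
  constructor
  intro I
  obtain ⟨a, ha⟩ := (IsPrincipalIdealRing.principal (I.map (RingHom.fst A B))).principal
  obtain ⟨b, hb⟩ := (IsPrincipalIdealRing.principal (I.map (RingHom.snd A B))).principal
  refine ⟨(a, b), ?_⟩
  rw [Ideal.ideal_prod_eq I, ha, hb]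
  ext ⟨x, y⟩
  rw [Ideal.mem_prod, Ideal.submodule_span_eq, Ideal.submodule_span_eq, Ideal.submodule_span_eq,
    Ideal.mem_span_singleton, Ideal.mem_span_singleton, Ideal.mem_span_singleton]
  constructor
  · rintro ⟨⟨c, rfl⟩, ⟨e, rfl⟩⟩
    exact ⟨(c, e), rfl⟩
  · rintro ⟨⟨c, e⟩, h⟩
    rw [Prod.ext_iff] at h
    exact ⟨⟨c, h.1⟩, ⟨e, h.2⟩⟩

instance (d : ℤ) : Module.Finite ℤ (Zsqrtd d) := by
  refine ⟨⟨{1, ⟨0,1⟩}, ?_⟩⟩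
  rw [eq_top_iff]
  rintro ⟨x, y⟩ -
  have : (⟨x, y⟩ : Zsqrtd d) = x • (1 : Zsqrtd d) + y • (⟨0,1⟩ : Zsqrtd d) := by
    ext <;> simp
  rw [this]
  exact add_mem (Submodule.smul_mem _ _ (Submodule.subset_span (by simp)))
    (Submodule.smul_mem _ _ (Submodule.subset_span (by simp)))

instance : IsPrincipalIdealRing (Zsqrtd 2) := pir2
instance : IsPrincipalIdealRing (Zsqrtd 3) := pir3
instance : IsPrincipalIdealRing (Zsqrtd 2 × Zsqrtd 3) := prod_pir _ _
instance : IsPrincipalIdealRing (ℤ × Zsqrtd 2 × Zsqrtd 3) := prod_pir _ _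

lemma key2 : ∀ a b1 b2 c1 c2 x y1 y2 z1 z2 : ZMod 2,
    a = 1 → a = b1 → a = c1 + c2 → b2 = c2 →
    a*x = b1*y1 + 2*b2*y2 →
    a*x = (c1*z1 + 3*c2*z2) + (c1*z2 + c2*z1) →
    b1*y2 + b2*y1 = c1*z2 + c2*z1 →
    (x = y1 ∧ x = z1 + z2 ∧ y2 = z2) := by decide

abbrev Rng : Type := ℤ × Zsqrtd 2 × Zsqrtd 3

def Wset : Set Rng :=
  {p | p.1 ≡ p.2.1.re [ZMOD 2] ∧ p.1 ≡ p.2.2.re + p.2.2.im [ZMOD 2] ∧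
       p.2.1.im ≡ p.2.2.im [ZMOD 2]}

private lemma modeq_iff (a b : ℤ) : a ≡ b [ZMOD 2] ↔ ((a : ZMod 2) = b) :=
  (ZMod.intCast_eq_intCast_iff a b 2).symm

def W : Subring Rng where
  carrier := Wset
  zero_mem' := by refine ⟨?_, ?_, ?_⟩ <;> decide
  one_mem' := by refine ⟨?_, ?_, ?_⟩ <;> decide
  add_mem' := by
    rintro a b ⟨h1, h2, h3⟩ ⟨g1, g2, g3⟩
    refine ⟨h1.add g1, ?_, h3.add g3⟩
    simpa [add_add_add_comm] using h2.add g2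
  neg_mem' := by
    rintro a ⟨h1, h2, h3⟩
    refine ⟨h1.neg, ?_, h3.neg⟩
    have := h2.neg
    simp only [Wset, Set.mem_setOf_eq, Prod.fst_neg, Prod.snd_neg, Zsqrtd.re_neg,
      Zsqrtd.im_neg, Int.modEq_iff_dvd] at this ⊢
    omega
  mul_mem' := by
    rintro a b ⟨h1, h2, h3⟩ ⟨g1, g2, g3⟩
    simp only [Wset, Set.mem_setOf_eq, Prod.fst_mul, Prod.snd_mul, Zsqrtd.re_mul,
      Zsqrtd.im_mul, modeq_iff] at h1 h2 h3 g1 g2 g3 ⊢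
    push_cast at h1 h2 h3 g1 g2 g3 ⊢
    have h0 : (2 : ZMod 2) = 0 := rfl
    refine ⟨?_, ?_, ?_⟩
    · rw [← h1, ← g1, h0]; ring
    · linear_combination (b.1 : ZMod 2) * h2 + ((a.2.2.re : ZMod 2) + a.2.2.im) * g2 -
        ((a.2.2.im : ZMod 2) * b.2.2.im) * h0
    · linear_combination (b.2.1.im : ZMod 2) * h2 - (b.2.1.im : ZMod 2) * h1
        + (b.2.1.re : ZMod 2) * h3 + ((a.2.2.re : ZMod 2) + a.2.2.im) * g3
        + (a.2.2.im : ZMod 2) * g2 - (a.2.2.im : ZMod 2) * g1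
        + ((a.2.2.im : ZMod 2) * b.2.2.im) * h0

lemma mem_W_iff (x : Rng) : x ∈ W ↔ x ∈ Wset := Iff.rfl


lemma key_div {g r : Rng} (hg : g ∈ Wset) (hodd : Odd g.1) (hgr : g * r ∈ Wset) :
    r ∈ Wset := by
  obtain ⟨h1, h2, h3⟩ := hg
  obtain ⟨k1, k2, k3⟩ := hgr
  rw [modeq_iff] at h1 h2 h3 k1 k2 k3
  simp only [Prod.fst_mul, Prod.snd_mul, Zsqrtd.re_mul, Zsqrtd.im_mul] at k1 k2 k3
  push_cast at h1 h2 h3 k1 k2 k3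
  have ha : (g.1 : ZMod 2) = 1 := by
    obtain ⟨k, hk⟩ := hodd
    rw [hk]
    push_cast
    rw [show ((2:ZMod 2)) = 0 from rfl]
    ring
  have K1 : (g.1 : ZMod 2) * r.1 =
      (g.2.1.re : ZMod 2) * r.2.1.re + 2 * g.2.1.im * r.2.1.im := by linear_combination k1
  have K2 : (g.1 : ZMod 2) * r.1 =
      ((g.2.2.re : ZMod 2) * r.2.2.re + 3 * g.2.2.im * r.2.2.im) +
        ((g.2.2.re : ZMod 2) * r.2.2.im + g.2.2.im * r.2.2.re) := by linear_combination k2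
  have K3 : (g.2.1.re : ZMod 2) * r.2.1.im + (g.2.1.im : ZMod 2) * r.2.1.re =
      (g.2.2.re : ZMod 2) * r.2.2.im + (g.2.2.im : ZMod 2) * r.2.2.re := by
    linear_combination k3
  obtain ⟨G1, G2, G3⟩ := key2 (g.1 : ZMod 2) (g.2.1.re : ZMod 2) (g.2.1.im : ZMod 2)
    (g.2.2.re : ZMod 2) (g.2.2.im : ZMod 2) (r.1 : ZMod 2) (r.2.1.re : ZMod 2)
    (r.2.1.im : ZMod 2) (r.2.2.re : ZMod 2) (r.2.2.im : ZMod 2)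
    ha h1 h2 h3 K1 K2 K3
  refine ⟨?_, ?_, ?_⟩ <;> rw [modeq_iff] <;> push_cast
  · exact G1
  · exact G2
  · exact G3

/-- Every maximal ideal of `W` of odd residue characteristic is principal: if `m` is a
maximal ideal of `W` not containing the element `2 = (2,2,2)` of `W`, then `m` is
principal. -/
theorem stmt4 (m : Ideal W) (hm : m.IsMaximal) (h2 : (2 : W) ∉ m) :
    m.IsPrincipal := by
  classical
  have halg : Algebra.IsIntegral W Rng := by
    constructor
    intro x
    exact IsIntegral.tower_top (A := W) (Algebra.IsIntegral.isIntegral (R := ℤ) x)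
  have hker : RingHom.ker (algebraMap W Rng) ≤ m := by
    intro x hx
    rw [RingHom.mem_ker] at hx
    have hx0 : x = 0 := Subtype.ext hx
    rw [hx0]; exact m.zero_mem
  obtain ⟨M, hMmax, hMcomap⟩ := Ideal.exists_ideal_over_maximal_of_isIntegral m hker
  have halgmap : ∀ w : W, algebraMap W Rng w = w.val := fun w => rfl
  have h2M : (2 : Rng) ∉ M := by
    intro h
    apply h2
    rw [← hMcomap, Ideal.mem_comap, halgmap]
    exact h
  obtain ⟨x, hxM⟩ := (IsPrincipalIdealRing.principal M).principal
  rw [Ideal.submodule_span_eq] at hxM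
  have hsup : M ⊔ Ideal.span {(2:Rng)} = ⊤ := by
    rcases (le_sup_left : M ≤ M ⊔ Ideal.span {(2:Rng)}).lt_or_eq with h | h
    · exact hMmax.1.2 _ h
    · exact absurd (h ▸ (le_sup_right : Ideal.span {(2:Rng)} ≤ M ⊔ Ideal.span {(2:Rng)})
        (Ideal.mem_span_singleton_self _)) h2M
  have h1mem : (1:Rng) ∈ M ⊔ Ideal.span {(2:Rng)} := hsup ▸ Submodule.mem_top
  rw [Submodule.mem_sup] at h1mem
  obtain ⟨a, haM, b, hb, hab⟩ := h1mem
  rw [hxM, Ideal.mem_span_singleton] at haM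
  rw [Ideal.mem_span_singleton] at hb
  obtain ⟨r, rfl⟩ := haM
  obtain ⟨s, rfl⟩ := hb
  -- component equations
  have e1 : x.1 * r.1 + 2 * s.1 = 1 := by
    have := congrArg Prod.fst hab
    simpa using this
  have e2 : x.2.1.re * r.2.1.re + 2 * x.2.1.im * r.2.1.im + 2 * s.2.1.re = 1 := by
    have := congrArg (fun p : Rng => p.2.1.re) hab
    simp [Zsqrtd.re_mul] at this
    linear_combination this
  have e3 : (x.2.2.re * r.2.2.re + 3 * x.2.2.im * r.2.2.im)
      + (x.2.2.re * r.2.2.im + x.2.2.im * r.2.2.re)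
      + 2 * (s.2.2.re + s.2.2.im) = 1 := by
    have h' := congrArg (fun p : Rng => p.2.2.re + p.2.2.im) hab
    simp [Zsqrtd.re_mul, Zsqrtd.im_mul] at h'
    linear_combination h'
  have hodd1 : x.1 % 2 = 1 := by
    have : Odd (x.1 * r.1) := ⟨-s.1, by linarith⟩
    have := (Int.odd_mul.mp this).1
    rw [Int.odd_iff] at this
    omega
  have hodd2 : x.2.1.re % 2 = 1 := by
    have : Odd (x.2.1.re * r.2.1.re) :=
      ⟨-(x.2.1.im * r.2.1.im + s.2.1.re), by linear_combination e2⟩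
    have := (Int.odd_mul.mp this).1
    rw [Int.odd_iff] at this
    omega
  have hodd3 : (x.2.2.re + x.2.2.im) % 2 = 1 := by
    have : Odd ((x.2.2.re + x.2.2.im) * (r.2.2.re + r.2.2.im)) :=
      ⟨-(x.2.2.im * r.2.2.im + s.2.2.re + s.2.2.im), by linear_combination e3⟩
    have := (Int.odd_mul.mp this).1
    rw [Int.odd_iff] at this
    omega
  -- construct associate generator g ∈ Wset
  obtain ⟨g, hgW, hg1, ⟨u, hu⟩, ⟨v, hv⟩⟩ :
      ∃ g : Rng, g ∈ Wset ∧ g.1 = x.1 ∧ (∃ u, g = x * u) ∧ (∃ v, x = g * v) := by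
    by_cases hpar : (2:ℤ) ∣ (x.2.1.im - x.2.2.im)
    · refine ⟨x, ⟨?_, ?_, ?_⟩, rfl, ⟨1, by ring⟩, ⟨1, by ring⟩⟩ <;>
        rw [Int.modEq_iff_dvd] <;> push_cast <;> omega
    · refine ⟨(x.1, ⟨x.2.1.re + 2*x.2.1.im, x.2.1.re + x.2.1.im⟩, x.2.2),
        ⟨?_, ?_, ?_⟩, rfl, ⟨(1, ⟨1,1⟩, 1), ?_⟩, ⟨(1, ⟨-1,1⟩, 1), ?_⟩⟩
      · rw [Int.modEq_iff_dvd]; push_cast; omega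
      · rw [Int.modEq_iff_dvd]; push_cast; omega
      · rw [Int.modEq_iff_dvd]; push_cast; omega
      · refine Prod.ext (by simp) (Prod.ext ?_ ?_)
        · ext <;> simp [Zsqrtd.re_mul, Zsqrtd.im_mul] <;> ring
        · simp
      · refine Prod.ext (by simp) (Prod.ext ?_ ?_)
        · ext <;> simp [Zsqrtd.re_mul, Zsqrtd.im_mul] <;> ring
        · simp
  have hgM : g ∈ M := by
    rw [hxM, Ideal.mem_span_singleton]
    exact ⟨u, hu⟩
  have hgodd : Odd g.1 := by rw [hg1, Int.odd_iff]; exact hodd1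
  refine ⟨⟨⟨g, hgW⟩, ?_⟩⟩
  ext w
  rw [Ideal.submodule_span_eq, Ideal.mem_span_singleton, ← hMcomap, Ideal.mem_comap, halgmap]
  constructor
  · intro hw
    rw [hxM, Ideal.mem_span_singleton] at hw
    obtain ⟨t, ht⟩ := hw
    have hval : w.val = g * (v * t) := by rw [ht, hv]; ring
    have hrW : (v * t) ∈ Wset := key_div hgW hgodd (by rw [← hval]; exact w.2)
    exact ⟨⟨v * t, hrW⟩, Subtype.ext hval⟩
  · rintro ⟨c, rfl⟩
    exact M.mul_mem_right c.val hgM
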